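/- Let Ω = (0,1) × Γ with Γ a set of cardinality greater than the continuum, 𝒜 the σ-algebra of sets A ⊆ Ω whose vertical sections A_x ⊆ Γ are countable or co-countable and whose horizontal sections A^γ ⊆ (0,1) are Borel, μ'(A) = Σ_{x∈(0,1)} ν(A_x) and μ''(A) = Σ_{γ∈Γ} λ(A^γ), where ν is the 0–1 countable/co-countable measure on Γ and λ is Lebesgue measure. Then μ' and μ'' are locally disjoint with respect to μ := μ' + μ'': for every A ∈ 𝒜 with μ(A) < ∞, the set I' := {x ∈ (0,1) : Γ \ A_x countable} is finite, and A' := A ∩ (I' × Γ) satisfies μ''(A') = 0 and μ'(A \ A') = 0. -/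

import Mathlib

open MeasureTheory Set ENNReal Cardinal

/-- In Fremlin's example `Ω = (0,1) × Γ` (with `|Γ| > 𝔠`), the measures
`μ'(A) = Σ_x ν(A_x)` and `μ''(A) = Σ_γ λ(A^γ)` are locally disjoint with respect to
`μ = μ' + μ''`: for every `A ∈ 𝒜` with `μ(A) < ∞`, the set
`I' = {x : Γ \ A_x countable}` is finite, and `A' = A ∩ (I' × Γ)` satisfies
`μ''(A') = 0` and `μ'(A \ A') = 0`. -/
theorem fremlin_locally_disjoint {Γ : Type*} (hΓ : Cardinal.continuum < #Γ)
    (ν : Set Γ → ℝ≥0∞) (hν0 : ∀ G : Set Γ, G.Countable → ν G = 0)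
    (hν1 : ∀ G : Set Γ, ¬G.Countable → ν G = 1)
    (μ' μ'' : Set (↥(Set.Ioo (0:ℝ) 1) × Γ) → ℝ≥0∞)
    (hμ' : ∀ A : Set (↥(Set.Ioo (0:ℝ) 1) × Γ),
      μ' A = ∑' x : ↥(Set.Ioo (0:ℝ) 1), ν {γ : Γ | (x, γ) ∈ A})
    (hμ'' : ∀ A : Set (↥(Set.Ioo (0:ℝ) 1) × Γ),
      μ'' A = ∑' γ : Γ,
        volume ((fun x : ↥(Set.Ioo (0:ℝ) 1) => (x : ℝ)) '' {x | (x, γ) ∈ A}))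
    (A : Set (↥(Set.Ioo (0:ℝ) 1) × Γ))
    (hsecV : ∀ x : ↥(Set.Ioo (0:ℝ) 1),
      {γ : Γ | (x, γ) ∈ A}.Countable ∨ ({γ : Γ | (x, γ) ∈ A}ᶜ : Set Γ).Countable)
    (hsecH : ∀ γ : Γ, MeasurableSet {x : ↥(Set.Ioo (0:ℝ) 1) | (x, γ) ∈ A})
    (hfin : μ' A + μ'' A < ∞) :
    {x : ↥(Set.Ioo (0:ℝ) 1) | ({γ : Γ | (x, γ) ∈ A}ᶜ : Set Γ).Countable}.Finite ∧
    μ'' (A ∩ {p : ↥(Set.Ioo (0:ℝ) 1) × Γ |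
      ({γ : Γ | (p.1, γ) ∈ A}ᶜ : Set Γ).Countable}) = 0 ∧
    μ' (A \ {p : ↥(Set.Ioo (0:ℝ) 1) × Γ |
      ({γ : Γ | (p.1, γ) ∈ A}ᶜ : Set Γ).Countable}) = 0 := by
  set I' : Set (↥(Set.Ioo (0:ℝ) 1)) :=
    {x | ({γ : Γ | (x, γ) ∈ A}ᶜ : Set Γ).Countable} with hI'def
  -- Γ is "big": co-countable sets are uncountable
  have hbig : ∀ G : Set Γ, (Gᶜ : Set Γ).Countable → ¬G.Countable := by
    intro G hGc hG
    have huniv : (Set.univ : Set Γ).Countable := by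
      simpa using hG.union hGc
    have : Countable Γ := Set.countable_univ_iff.mp huniv
    have h1 : #Γ ≤ Cardinal.aleph0 := Cardinal.mk_le_aleph0
    exact absurd hΓ (not_lt.mpr (h1.trans Cardinal.aleph0_le_continuum))
  -- part 1 : I' is finite
  have hμ'fin : μ' A < ∞ := lt_of_le_of_lt (le_add_right le_rfl) hfin
  have hIfin : I'.Finite := by
    by_contra hinf
    have hinf : I'.Infinite := hinf
    have : Infinite I' := hinf.to_subtype
    have htop : (∑' _ : I', (1 : ℝ≥0∞)) = ∞ := ENNReal.tsum_const_eq_top_of_ne_zero one_ne_zero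
    have hle : (∑' x : I', (1 : ℝ≥0∞)) ≤ ∑' x : ↥(Set.Ioo (0:ℝ) 1), ν {γ : Γ | (x, γ) ∈ A} := by
      have := ENNReal.tsum_comp_le_tsum_of_injective
        (Subtype.val_injective (p := fun x => x ∈ I'))
        (fun x => ν {γ : Γ | (x, γ) ∈ A})
      refine le_trans (le_of_eq ?_) this
      refine tsum_congr fun x => ?_
      exact (hν1 _ (hbig _ x.2)).symm
    rw [hμ' A] at hμ'fin
    exact absurd (lt_of_le_of_lt hle hμ'fin) (by simp [htop])
  refine ⟨hIfin, ?_, ?_⟩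
  · -- μ'' of A' is 0
    rw [hμ'']
    refine ENNReal.tsum_eq_zero.mpr fun γ => ?_
    have hsub : ((fun x : ↥(Set.Ioo (0:ℝ) 1) => (x : ℝ)) ''
        {x | (x, γ) ∈ A ∩ {p : ↥(Set.Ioo (0:ℝ) 1) × Γ |
          ({γ : Γ | (p.1, γ) ∈ A}ᶜ : Set Γ).Countable}}) ⊆
        (fun x : ↥(Set.Ioo (0:ℝ) 1) => (x : ℝ)) '' I' := by
      refine Set.image_mono ?_
      intro x hx
      exact hx.2
    refine measure_mono_null hsub ?_
    exact (hIfin.image _).measure_zero _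
  · -- μ' of A \ A' is 0
    rw [hμ']
    refine ENNReal.tsum_eq_zero.mpr fun x => ?_
    by_cases hx : x ∈ I'
    · have : {γ : Γ | (x, γ) ∈ A \ {p : ↥(Set.Ioo (0:ℝ) 1) × Γ |
          ({γ : Γ | (p.1, γ) ∈ A}ᶜ : Set Γ).Countable}} = ∅ := by
        ext γ; simp only [Set.mem_setOf_eq, Set.mem_diff, Set.mem_empty_iff_false, iff_false]
        rintro ⟨-, h2⟩; exact h2 hx
      rw [this]; exact hν0 _ Set.countable_empty
    · have hcnt : {γ : Γ | (x, γ) ∈ A}.Countable := (hsecV x).resolve_right hx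
      refine hν0 _ (hcnt.mono ?_)
      intro γ hγ; exact hγ.1
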